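/- Density of Lipschitz paths transversal to countably many Lipschitz graphs: Let T > 0 and X ∈ ℝ. Let (y_m)_{m∈ℕ} be a countable family of Lipschitz functions defined on subintervals of [0,T] with values in ℝ, and set J := ⋃_m graph(y_m) ⊆ ℝ². Let 𝒢(T,X) := {φ : [0,T] → ℝ : φ Lipschitz, φ(T) = X}. Then the set ℱ := {φ ∈ 𝒢(T,X) : ℋ¹(graph(φ) ∩ J) = 0} is dense in 𝒢(T,X) for the W^{1,∞} topology: for every φ ∈ 𝒢(T,X) and every ε > 0 there exists ψ ∈ 𝒢(T,X) with ℋ¹(graph(ψ) ∩ J) = 0 such that sup_{t∈[0,T]} |φ(t) − ψ(t)| ≤ ε and φ − ψ is ε-Lipschitz, where ℋ¹ denotes the 1-dimensional Hausdorff measure on ℝ². -/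

import Mathlib

open MeasureTheory Metric Set Filter
open scoped ENNReal NNReal Topology

noncomputable section

/-- Density, in the W^{1,∞} sense, of Lipschitz paths ending at (T,X)
whose graphs meet a given countable union of Lipschitz graphs in a set of
1-dimensional Hausdorff measure zero. -/
theorem dense_transversal_lipschitz_paths
    (T X : ℝ) (hT : 0 < T)
    (doms : ℕ → Set ℝ) (ys : ℕ → ℝ → ℝ)
    (hdoms : ∀ m, doms m ⊆ Icc 0 T ∧ (doms m).OrdConnected)
    (hys : ∀ m, ∃ K : ℝ≥0, LipschitzOnWith K (ys m) (doms m))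
    (φ : ℝ → ℝ) (hφ : ∃ K : ℝ≥0, LipschitzOnWith K φ (Icc 0 T)) (hφT : φ T = X)
    (ε : ℝ) (hε : 0 < ε) :
    ∃ ψ : ℝ → ℝ,
      (∃ K : ℝ≥0, LipschitzOnWith K ψ (Icc 0 T)) ∧
      ψ T = X ∧
      μH[1] (Set.graphOn ψ (Icc 0 T) ∩ ⋃ m, Set.graphOn (ys m) (doms m)) = 0 ∧
      (∀ t ∈ Icc 0 T, |φ t - ψ t| ≤ ε) ∧
      LipschitzOnWith ε.toNNReal (fun t => φ t - ψ t) (Icc 0 T) := by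
  obtain ⟨K, hK⟩ := hφ
  obtain ⟨φ', hφ'lip, hφ'eq⟩ := hK.extend_real
  choose Ks hKs using hys
  choose ys' hys'lip hys'eq using fun m => (hKs m).extend_real
  -- coincidence sets
  set Z : ℝ → ℕ → Set ℝ := fun a m =>
    doms m ∩ {t | φ' t + a * (T - t) = ys' m t} with hZdef
  have hZmeas : ∀ a m, MeasurableSet (Z a m \ {T}) := by
    intro a m
    refine (((hdoms m).2.measurableSet).inter ?_).diff (measurableSet_singleton T)
    exact (isClosed_eq (hφ'lip.continuous.add (by fun_prop))
      (hys'lip m).continuous).measurableSet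
  -- for each m, the coincidence sets (minus {T}) are pairwise disjoint in a
  have hdisj : ∀ m, Pairwise (Function.onFun Disjoint fun a => Z a m \ {T}) := by
    intro m a a' hne
    simp only [Function.onFun, Set.disjoint_left]
    rintro t ⟨⟨-, ht⟩, htT⟩ ⟨⟨-, ht'⟩, -⟩
    apply htT
    have : a * (T - t) = a' * (T - t) := by
      have := ht.trans ht'.symm; linarith
    have hTt : T - t = 0 := by
      by_contra h
      exact hne (mul_right_cancel₀ h this)
    simp [show t = T by linarith]
  -- bad slopes are countable
  have hB : (⋃ m, {a : ℝ | 0 < volume (Z a m \ {T})}).Countable := by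
    refine Set.countable_iUnion fun m => ?_
    exact MeasureTheory.Measure.countable_meas_pos_of_disjoint_iUnion
      (fun a => hZmeas a m) (hdisj m)
  -- pick a good small slope a
  set δ : ℝ := min ε (ε / T) with hδdef
  have hδpos : 0 < δ := lt_min hε (div_pos hε hT)
  obtain ⟨a, haI, haB⟩ : ∃ a ∈ Ioo (0:ℝ) δ, a ∉ ⋃ m, {a : ℝ | 0 < volume (Z a m \ {T})} := by
    by_contra h
    push_neg at h
    have hsub : Ioo (0:ℝ) δ ⊆ ⋃ m, {a : ℝ | 0 < volume (Z a m \ {T})} := fun a ha => h a ha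
    have := measure_mono_null hsub (hB.measure_zero volume)
    rw [Real.volume_Ioo] at this
    simp only [ENNReal.ofReal_eq_zero] at this
    linarith
  have ha0 : 0 < a := haI.1
  have haδ : a < δ := haI.2
  have haε : a ≤ ε := le_of_lt (lt_of_lt_of_le haδ (min_le_left _ _))
  have haT : a * T ≤ ε := by
    have : a < ε / T := lt_of_lt_of_le haδ (min_le_right _ _)
    calc a * T ≤ (ε / T) * T := by nlinarith
    _ = ε := by field_simp
  -- volumes of coincidence sets are zero
  have hZvol : ∀ m, volume (Z a m) = 0 := by
    intro m
    have h1 : volume (Z a m \ {T}) = 0 := by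
      by_contra h
      exact haB (Set.mem_iUnion.mpr ⟨m, pos_iff_ne_zero.mpr h⟩)
    have : Z a m ⊆ (Z a m \ {T}) ∪ {T} := fun t ht => by
      by_cases h : t = T
      · exact Or.inr h
      · exact Or.inl ⟨ht, h⟩
    refine measure_mono_null this ?_
    rw [measure_union_null_iff]
    exact ⟨h1, measure_singleton T⟩
  -- define ψ
  set ψ : ℝ → ℝ := fun t => φ t + a * (T - t) with hψdef
  set ψ' : ℝ → ℝ := fun t => φ' t + a * (T - t) with hψ'def
  have hlin : LipschitzWith a.toNNReal (fun t : ℝ => a * (T - t)) := by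
    refine LipschitzWith.of_dist_le_mul fun x y => ?_
    rw [Real.dist_eq, Real.dist_eq]
    have : a * (T - x) - (a * (T - y)) = a * (y - x) := by ring
    rw [this, abs_mul, abs_of_pos ha0, Real.coe_toNNReal _ ha0.le, abs_sub_comm]
  have hψ'lip : LipschitzWith (K + a.toNNReal) ψ' := hφ'lip.add hlin
  have hψeq : EqOn ψ ψ' (Icc 0 T) := fun t ht => by
    simp only [hψdef, hψ'def, hφ'eq ht]
  have hψlipOn : LipschitzOnWith (K + a.toNNReal) ψ (Icc 0 T) := fun x hx y hy => by
    rw [hψeq hx, hψeq hy]; exact hψ'lip x y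
  refine ⟨ψ, ⟨K + a.toNNReal, hψlipOn⟩, ?_, ?_, ?_, ?_⟩
  · simp [hψdef, hφT]
  · -- the measure-zero statement
    rw [Set.inter_iUnion]
    refine measure_iUnion_null fun m => ?_
    -- the intersection is contained in the Lipschitz image of Z a m
    set g : ℝ → ℝ × ℝ := fun t => (t, ψ' t) with hgdef
    have hglip : LipschitzWith (max 1 (K + a.toNNReal)) g :=
      LipschitzWith.prodMk LipschitzWith.id hψ'lip
    have hsub : Set.graphOn ψ (Icc 0 T) ∩ Set.graphOn (ys m) (doms m) ⊆ g '' (Z a m) := by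
      rintro p ⟨⟨t, ht, rfl⟩, ⟨s, hs, hp⟩⟩
      have hts : s = t := (Prod.mk.injEq _ _ _ _).mp hp |>.1
      subst hts
      have hval : ys m s = ψ s := ((Prod.mk.injEq _ _ _ _).mp hp).2
      have hsIcc : s ∈ Icc 0 T := (hdoms m).1 hs
      have hmem : s ∈ Z a m := by
        refine ⟨hs, ?_⟩
        simp only [Set.mem_setOf_eq]
        have : ys' m s = ψ' s := by rw [← hys'eq m hs, hval, hψeq hsIcc]
        exact this.symm
      exact ⟨s, hmem, by simp [hgdef, ← hψeq hsIcc]⟩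
    refine measure_mono_null hsub ?_
    have hle := hglip.hausdorffMeasure_image_le (d := 1) (by norm_num) (Z a m)
    have : μH[1] (Z a m) = 0 := by
      rw [MeasureTheory.hausdorffMeasure_real]; exact hZvol m
    rw [this, mul_zero] at hle
    exact le_antisymm hle zero_le
  · intro t ht
    have h1 : φ t - ψ t = -(a * (T - t)) := by simp only [hψdef]; ring
    rw [h1, abs_neg, abs_mul, abs_of_pos ha0, abs_of_nonneg (by linarith [ht.2] : (0:ℝ) ≤ T - t)]
    have : a * (T - t) ≤ a * T := by nlinarith [ht.1]
    linarith
  · refine LipschitzOnWith.of_dist_le_mul fun x hx y hy => ?_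
    have h1 : φ x - ψ x = a * x - a * T := by simp only [hψdef]; ring
    have h2 : φ y - ψ y = a * y - a * T := by simp only [hψdef]; ring
    rw [Real.dist_eq, Real.dist_eq, h1, h2]
    have : a * x - a * T - (a * y - a * T) = a * (x - y) := by ring
    rw [this, abs_mul, abs_of_pos ha0]
    have : (ε.toNNReal : ℝ) = ε := Real.coe_toNNReal _ hε.le
    rw [this]
    nlinarith [abs_nonneg (x - y)]

end
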